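/- Let n be a positive integer and let x, y be symmetric n×n complex matrices (xᵀ = x, yᵀ = y) such that I − x xᴴ and I − xᴴ x are (Hermitian) positive definite and I − xᴴ y is invertible. Set z = φ_x(y) = (I − x xᴴ)^{−1/2} (y − x) (I − xᴴ y)^{−1} (I − xᴴ x)^{1/2}, and assume I + z xᴴ is invertible. Then y = (I − x xᴴ)^{1/2} (I + z xᴴ)^{−1} (z + x) (I − xᴴ x)^{−1/2}. -/

import Mathlib

open Matrix
open scoped ComplexOrder

/-- `Matrix.PosSemidef.sqrt` as it stood in Mathlib (December 2024); since removed. -/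
noncomputable def Matrix.PosSemidef.sqrt {n : Type*} [Fintype n] [DecidableEq n] {𝕜 : Type*}
    [RCLike 𝕜] {A : Matrix n n 𝕜} (hA : A.PosSemidef) : Matrix n n 𝕜 :=
  hA.1.eigenvectorUnitary.1 * diagonal ((↑) ∘ (√·) ∘ hA.1.eigenvalues) *
    (star hA.1.eigenvectorUnitary : Matrix n n 𝕜)

namespace SiegelAux

open Polynomial

variable {n : ℕ}

lemma aeval_comm (c m m' : Matrix (Fin n) (Fin n) ℂ)
    (h : c * m = m' * c) (p : Polynomial ℂ) :
    c * (Polynomial.aeval m p) = (Polynomial.aeval m' p) * c := by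
  have hpow : ∀ k : ℕ, c * m ^ k = m' ^ k * c := by
    intro k
    induction k with
    | zero => simp
    | succ k ih =>
      rw [pow_succ, pow_succ, ← mul_assoc, ih, mul_assoc, h, ← mul_assoc]
  induction p using Polynomial.induction_on' with
  | add p q hp hq => simp only [map_add, mul_add, add_mul, hp, hq]
  | monomial k a =>
    simp only [Polynomial.aeval_monomial]
    calc c * (algebraMap ℂ _ a * m ^ k)
        = algebraMap ℂ _ a * (c * m ^ k) := by
          rw [← mul_assoc, ← Algebra.commutes, mul_assoc]
      _ = algebraMap ℂ _ a * (m' ^ k * c) := by rw [hpow]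
      _ = algebraMap ℂ _ a * m' ^ k * c := by rw [mul_assoc]

lemma aeval_diagonal (d : Fin n → ℂ) (p : Polynomial ℂ) :
    Polynomial.aeval (Matrix.diagonal d) p
      = Matrix.diagonal (fun i => p.eval (d i)) := by
  induction p using Polynomial.induction_on' with
  | add p q hp hq =>
    simp only [map_add, hp, hq, Polynomial.eval_add, Matrix.diagonal_add]
  | monomial k a =>
    simp only [Polynomial.aeval_monomial, Polynomial.eval_monomial]
    rw [Matrix.diagonal_pow]
    have h' : (algebraMap ℂ (Matrix (Fin n) (Fin n) ℂ)) a
        = Matrix.diagonal (fun _ => a) := by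
      simp [Matrix.algebraMap_eq_diagonal]
    rw [h', Matrix.diagonal_mul_diagonal]
    simp [Pi.pow_apply]

lemma aeval_conj (V W D : Matrix (Fin n) (Fin n) ℂ)
    (h1 : V * W = 1) (h2 : W * V = 1) (p : Polynomial ℂ) :
    Polynomial.aeval (V * D * W) p = V * (Polynomial.aeval D p) * W := by
  have hpow : ∀ k : ℕ, (V * D * W) ^ k = V * D ^ k * W := by
    intro k
    induction k with
    | zero => simp [h1]
    | succ k ih =>
      rw [pow_succ, pow_succ, ih]
      calc V * D ^ k * W * (V * D * W)
          = V * D ^ k * (W * V) * D * W := by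
            simp only [mul_assoc]
        _ = V * (D ^ k * D) * W := by rw [h2]; simp only [mul_one, mul_assoc]
  induction p using Polynomial.induction_on' with
  | add p q hp hq => simp only [map_add, hp, hq, mul_add, add_mul]
  | monomial k a =>
    simp only [Polynomial.aeval_monomial, hpow, ← Algebra.smul_def]
    simp only [Matrix.smul_mul, Matrix.mul_smul]

lemma sqrt_eq_aeval {A : Matrix (Fin n) (Fin n) ℂ} (hA : A.PosSemidef)
    (p : Polynomial ℂ)
    (hp : ∀ i, p.eval ((hA.1.eigenvalues i : ℝ) : ℂ)
      = ((Real.sqrt (hA.1.eigenvalues i) : ℝ) : ℂ)) :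
    hA.sqrt = Polynomial.aeval A p := by
  have hU1 : (hA.1.eigenvectorUnitary : Matrix (Fin n) (Fin n) ℂ)
      * (star hA.1.eigenvectorUnitary : Matrix (Fin n) (Fin n) ℂ) = 1 :=
    (Matrix.mem_unitaryGroup_iff).mp hA.1.eigenvectorUnitary.2
  have hU2 : (star hA.1.eigenvectorUnitary : Matrix (Fin n) (Fin n) ℂ)
      * (hA.1.eigenvectorUnitary : Matrix (Fin n) (Fin n) ℂ) = 1 :=
    (Matrix.mem_unitaryGroup_iff').mp hA.1.eigenvectorUnitary.2
  conv_rhs => rw [hA.1.spectral_theorem, Unitary.conjStarAlgAut_apply]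
  rw [aeval_conj _ _ _ hU1 hU2, aeval_diagonal]
  unfold Matrix.PosSemidef.sqrt
  have hfun : (fun i => p.eval ((RCLike.ofReal ∘ hA.1.eigenvalues) i))
      = ((RCLike.ofReal : ℝ → ℂ) ∘ Real.sqrt ∘ hA.1.eigenvalues) := by
    funext i
    simp only [Function.comp_apply]
    exact_mod_cast hp i
  rw [hfun]

lemma sqrt_intertwine {M₁ M₂ c : Matrix (Fin n) (Fin n) ℂ}
    (h₁ : M₁.PosSemidef) (h₂ : M₂.PosSemidef) (h : c * M₁ = M₂ * c) :
    c * h₁.sqrt = h₂.sqrt * c := by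
  classical
  set s : Finset ℂ :=
    (Finset.univ.image fun i => ((h₁.1.eigenvalues i : ℝ) : ℂ)) ∪
    (Finset.univ.image fun i => ((h₂.1.eigenvalues i : ℝ) : ℂ)) with hs
  set r : ℂ → ℂ := fun t => ((Real.sqrt t.re : ℝ) : ℂ) with hr
  set p : Polynomial ℂ := Lagrange.interpolate s id r with hpdef
  have hnode : ∀ t ∈ s, p.eval t = r t := by
    intro t ht
    exact Lagrange.eval_interpolate_at_node r (Function.injective_id.injOn) ht
  have e1 : h₁.sqrt = Polynomial.aeval M₁ p := by
    apply sqrt_eq_aeval h₁ p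
    intro i
    have hmem : ((h₁.1.eigenvalues i : ℝ) : ℂ) ∈ s := by
      rw [hs]
      exact Finset.mem_union_left _ (Finset.mem_image_of_mem _ (Finset.mem_univ i))
    rw [hnode _ hmem, hr]
    simp
  have e2 : h₂.sqrt = Polynomial.aeval M₂ p := by
    apply sqrt_eq_aeval h₂ p
    intro i
    have hmem : ((h₂.1.eigenvalues i : ℝ) : ℂ) ∈ s := by
      rw [hs]
      exact Finset.mem_union_right _ (Finset.mem_image_of_mem _ (Finset.mem_univ i))
    rw [hnode _ hmem, hr]
    simp
  rw [e1, e2]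
  exact aeval_comm _ _ _ h p

lemma sqrt_mul_self' {A : Matrix (Fin n) (Fin n) ℂ} (hA : A.PosSemidef) :
    hA.sqrt * hA.sqrt = A := by
  have hU2 : (star hA.1.eigenvectorUnitary : Matrix (Fin n) (Fin n) ℂ)
      * (hA.1.eigenvectorUnitary : Matrix (Fin n) (Fin n) ℂ) = 1 :=
    (Matrix.mem_unitaryGroup_iff').mp hA.1.eigenvectorUnitary.2
  conv_rhs => rw [hA.1.spectral_theorem, Unitary.conjStarAlgAut_apply]
  unfold Matrix.PosSemidef.sqrt
  rw [show ∀ U D S : Matrix (Fin n) (Fin n) ℂ, U * D * S * (U * D * S)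
      = U * (D * (S * U) * D) * S from fun U D S => by simp only [mul_assoc], hU2, mul_one,
    diagonal_mul_diagonal]
  congr 3
  funext i
  simp only [Function.comp_apply]
  rw [← RCLike.ofReal_mul, Real.mul_self_sqrt (hA.eigenvalues_nonneg i)]

lemma sqrt_isHermitian' {A : Matrix (Fin n) (Fin n) ℂ} (hA : A.PosSemidef) :
    hA.sqrt.IsHermitian := by
  unfold Matrix.PosSemidef.sqrt
  simp [Matrix.IsHermitian, Matrix.conjTranspose_mul, Matrix.diagonal_conjTranspose, mul_assoc]
  rw [← Matrix.star_eq_conjTranspose, ← Matrix.star_eq_conjTranspose, star_star]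
  congr 3
  funext i
  simp

lemma isUnit_one_sub_swap {R : Type*} [Ring R] {a b : R}
    (h : IsUnit (1 - a * b)) : IsUnit (1 - b * a) := by
  obtain ⟨u, hu⟩ := h
  set v : R := ↑u⁻¹ with hv
  have hv1 : (1 - a * b) * v = 1 := by rw [← hu]; exact u.mul_inv
  have hv2 : v * (1 - a * b) = 1 := by rw [← hu]; exact u.inv_mul
  have habv : a * b * v = v - 1 := by
    rw [sub_mul, one_mul] at hv1
    rw [eq_sub_iff_add_eq, ← hv1]
    abel
  have hvab : v * (a * b) = v - 1 := by
    rw [mul_sub, mul_one] at hv2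
    rw [eq_sub_iff_add_eq, ← hv2]
    abel
  refine isUnit_iff_exists.mpr ⟨1 + b * v * a, ?_, ?_⟩
  · have expand : (1 - b * a) * (1 + b * v * a)
        = 1 + b * v * a - b * a - b * (a * b * v) * a := by noncomm_ring
    rw [expand, habv]
    noncomm_ring
  · have expand : (1 + b * v * a) * (1 - b * a)
        = 1 - b * a + b * v * a - b * (v * (a * b)) * a := by noncomm_ring
    rw [expand, hvab]
    noncomm_ring

end SiegelAux

/-- Proposition 6.2: the inverse of the Siegel-disk automorphism.  If
`z = φ_x(y) = (I - x xᴴ)^{-1/2} (y - x) (I - xᴴ y)⁻¹ (I - xᴴ x)^{1/2}` and `I + z xᴴ` is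
invertible, then `y = (I - x xᴴ)^{1/2} (I + z xᴴ)⁻¹ (z + x) (I - xᴴ x)^{-1/2}`. -/
theorem siegel_disk_automorphism_inverse {n : ℕ} (hn : 0 < n)
    (x y : Matrix (Fin n) (Fin n) ℂ)
    (hxs : xᵀ = x) (hys : yᵀ = y)
    (h1 : (1 - x * xᴴ).PosDef) (h2 : (1 - xᴴ * x).PosDef)
    (h4 : IsUnit (1 - xᴴ * y))
    (z : Matrix (Fin n) (Fin n) ℂ)
    (hz : z = (h1.posSemidef.sqrt)⁻¹ * (y - x) * (1 - xᴴ * y)⁻¹ * h2.posSemidef.sqrt)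
    (hzu : IsUnit (1 + z * xᴴ)) :
    y = h1.posSemidef.sqrt * (1 + z * xᴴ)⁻¹ * (z + x) * (h2.posSemidef.sqrt)⁻¹ := by
  classical
  set A := h1.posSemidef.sqrt with hAdef
  set B := h2.posSemidef.sqrt with hBdef
  set K := 1 - xᴴ * y with hKdef
  set L := 1 - y * xᴴ with hLdef
  have hAA : A * A = 1 - x * xᴴ := SiegelAux.sqrt_mul_self' h1.posSemidef
  have hBB : B * B = 1 - xᴴ * x := SiegelAux.sqrt_mul_self' h2.posSemidef
  have hxA : xᴴ * A = B * xᴴ :=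
    SiegelAux.sqrt_intertwine h1.posSemidef h2.posSemidef (by noncomm_ring)
  have hAx : A * x = x * B := by
    have hc := congrArg Matrix.conjTranspose hxA
    have hAh : Aᴴ = A := (SiegelAux.sqrt_isHermitian' h1.posSemidef).eq
    have hBh : Bᴴ = B := (SiegelAux.sqrt_isHermitian' h2.posSemidef).eq
    simp only [Matrix.conjTranspose_mul, Matrix.conjTranspose_conjTranspose,
      hAh, hBh] at hc
    exact hc
  -- invertibility
  have hLu : IsUnit L := SiegelAux.isUnit_one_sub_swap (a := xᴴ) (b := y) h4
  haveI := h4.invertible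
  haveI := hLu.invertible
  have hAu : IsUnit A := by
    rw [Matrix.isUnit_iff_isUnit_det]
    have hd : A.det * A.det = (1 - x * xᴴ).det := by rw [← Matrix.det_mul, hAA]
    have h0 : (1 - x * xᴴ).det ≠ 0 := h1.det_pos.ne'
    have : A.det ≠ 0 := by
      intro hc
      rw [hc, mul_zero] at hd
      exact h0 hd.symm
    exact this.isUnit
  have hBu : IsUnit B := by
    rw [Matrix.isUnit_iff_isUnit_det]
    have hd : B.det * B.det = (1 - xᴴ * x).det := by rw [← Matrix.det_mul, hBB]
    have h0 : (1 - xᴴ * x).det ≠ 0 := h2.det_pos.ne'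
    have : B.det ≠ 0 := by
      intro hc
      rw [hc, mul_zero] at hd
      exact h0 hd.symm
    exact this.isUnit
  haveI := hAu.invertible
  haveI := hBu.invertible
  -- key relations
  have hKx : K⁻¹ * xᴴ = xᴴ * L⁻¹ := by
    have hxL : xᴴ * L = K * xᴴ := by rw [hKdef, hLdef]; noncomm_ring
    calc K⁻¹ * xᴴ = K⁻¹ * (xᴴ * L * L⁻¹) := by
          rw [Matrix.mul_inv_cancel_right_of_invertible]
      _ = K⁻¹ * (K * (xᴴ * L⁻¹)) := by rw [hxL, mul_assoc]
      _ = xᴴ * L⁻¹ := by rw [Matrix.inv_mul_cancel_left_of_invertible]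
  have hsum1 : L + (y - x) * xᴴ = 1 - x * xᴴ := by rw [hLdef]; noncomm_ring
  have hsum2 : (y - x) + x * K = (1 - x * xᴴ) * y := by rw [hKdef]; noncomm_ring
  have eq1 : 1 + z * xᴴ = A * (L⁻¹ * A) := by
    have hstep : A * (1 + z * xᴴ) = (1 - x * xᴴ) * (L⁻¹ * A) := by
      rw [hz, mul_add, mul_one]
      simp only [mul_assoc]
      rw [Matrix.mul_inv_cancel_left_of_invertible, ← hxA,
        ← mul_assoc K⁻¹ xᴴ A, hKx, ← hsum1]
      rw [add_mul, Matrix.mul_inv_cancel_left_of_invertible]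
      simp only [mul_assoc]
    calc 1 + z * xᴴ = A⁻¹ * (A * (1 + z * xᴴ)) :=
          (Matrix.inv_mul_cancel_left_of_invertible (A := A) _).symm
      _ = A⁻¹ * ((A * A) * (L⁻¹ * A)) := by rw [hstep, hAA]
      _ = A * (L⁻¹ * A) := by
          rw [mul_assoc A A, Matrix.inv_mul_cancel_left_of_invertible]
  have eq2 : z + x = A * (y * (K⁻¹ * B)) := by
    have hstep : A * (z + x) = (1 - x * xᴴ) * (y * (K⁻¹ * B)) := by
      rw [hz, mul_add]
      simp only [mul_assoc]
      rw [Matrix.mul_inv_cancel_left_of_invertible, hAx,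
        ← mul_assoc (1 - x * xᴴ) y, ← hsum2, add_mul, mul_assoc x K,
        Matrix.mul_inv_cancel_left_of_invertible]
    calc z + x = A⁻¹ * (A * (z + x)) :=
          (Matrix.inv_mul_cancel_left_of_invertible (A := A) _).symm
      _ = A⁻¹ * ((A * A) * (y * (K⁻¹ * B))) := by rw [hstep, hAA]
      _ = A * (y * (K⁻¹ * B)) := by
          rw [mul_assoc A A, Matrix.inv_mul_cancel_left_of_invertible]
  rw [eq1, eq2, Matrix.mul_inv_rev, Matrix.mul_inv_rev, Matrix.inv_inv_of_invertible]
  simp only [mul_assoc, Matrix.mul_inv_cancel_left_of_invertible,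
    Matrix.inv_mul_cancel_left_of_invertible, Matrix.mul_inv_of_invertible, mul_one]
  have hLy : L * y = y * K := by rw [hKdef, hLdef]; noncomm_ring
  rw [← mul_assoc, hLy, Matrix.mul_inv_cancel_right_of_invertible]
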